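/- For 0 < α ≤ 1, f of exponential order, and u > 0 small, the Sumudu transform of the Riemann–Liouville fractional integral I^α f(t) = (1/Γ(α)) ∫₀^t (t−s)^{α−1} f(s) ds satisfies S[I^α f](u) = u^{α} S[f](u). -/

import Mathlib

open MeasureTheory Real

noncomputable def sumudu (f : ℝ → ℝ) (u : ℝ) : ℝ :=
  ∫ t in Set.Ioi (0 : ℝ), f (u * t) * Real.exp (-t)

/-- Riemann–Liouville fractional integral of order α. -/
noncomputable def rlIntegral (α : ℝ) (f : ℝ → ℝ) (t : ℝ) : ℝ :=
  (1 / Real.Gamma α) * ∫ s in (0 : ℝ)..t, (t - s) ^ (α - 1) * f s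

lemma aux_ker_int (α t : ℝ) (hα : 0 < α) :
    IntegrableOn (fun σ => (t - σ) ^ (α - 1)) (Set.Ioo 0 t) := by
  rcases le_or_gt t 0 with ht | ht
  · rw [Set.Ioo_eq_empty (not_lt.2 ht)]
    exact integrableOn_empty
  · have h1 : IntervalIntegrable (fun x : ℝ => x ^ (α - 1)) volume 0 t :=
      intervalIntegral.intervalIntegrable_rpow' (by linarith)
    have h2 := (h1.comp_sub_left t).symm
    simp only [sub_self, sub_zero] at h2
    exact ((intervalIntegrable_iff_integrableOn_Ioc_of_le ht.le).1 h2).mono_set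
      Set.Ioo_subset_Ioc_self

lemma aux_ker_val (α t : ℝ) (hα : 0 < α) (ht : 0 ≤ t) :
    ∫ σ in Set.Ioo 0 t, (t - σ) ^ (α - 1) = t ^ α / α := by
  rw [← integral_Ioc_eq_integral_Ioo, ← intervalIntegral.integral_of_le ht,
    intervalIntegral.integral_comp_sub_left (fun x => x ^ (α - 1)) t]
  simp only [sub_zero, sub_self]
  rw [integral_rpow (Or.inl (by linarith))]
  have h1 : α - 1 + 1 = α := by ring
  rw [h1, Real.zero_rpow (ne_of_gt hα)]
  ring

lemma aux_texp (α b t : ℝ) (hα : 0 < α) (hα1 : α ≤ 1) (hb : 0 < b) (ht : 0 ≤ t) :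
    t ^ α * Real.exp (-(b * t)) ≤ (1 + 2 / b) * Real.exp (-(b / 2) * t) := by
  have h1 : t ^ α ≤ 1 + t := by
    rcases le_or_gt t 1 with h | h
    · have := Real.rpow_le_one ht h hα.le
      linarith
    · have := Real.rpow_le_rpow_of_exponent_le h.le hα1
      rw [Real.rpow_one] at this
      linarith
  have h2 : 1 + t ≤ (1 + 2 / b) * Real.exp ((b / 2) * t) := by
    have he1 : (1 : ℝ) ≤ Real.exp ((b / 2) * t) :=
      Real.one_le_exp (by positivity)
    have he2 : (b / 2) * t ≤ Real.exp ((b / 2) * t) := by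
      have := Real.add_one_le_exp ((b / 2) * t); linarith
    have h3 : t ≤ (2 / b) * Real.exp ((b / 2) * t) := by
      have hb' : 0 < 2 / b := by positivity
      calc t = (2 / b) * ((b / 2) * t) := by field_simp
        _ ≤ (2 / b) * Real.exp ((b / 2) * t) := by
            have := Real.add_one_le_exp ((b / 2) * t)
            nlinarith [Real.exp_pos ((b/2)*t)]
    nlinarith [Real.exp_pos ((b/2)*t)]
  have hexp : Real.exp ((b / 2) * t) * Real.exp (-(b * t)) = Real.exp (-(b / 2) * t) := by
    rw [← Real.exp_add]; congr 1; ring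
  calc t ^ α * Real.exp (-(b * t)) ≤ (1 + t) * Real.exp (-(b * t)) := by
        have := Real.exp_pos (-(b * t)); nlinarith
    _ ≤ ((1 + 2 / b) * Real.exp ((b / 2) * t)) * Real.exp (-(b * t)) := by
        have := Real.exp_pos (-(b * t)); nlinarith
    _ = (1 + 2 / b) * Real.exp (-(b / 2) * t) := by rw [mul_assoc, hexp]

lemma aux_ptbound (α u τ M t : ℝ) (f : ℝ → ℝ)
    (hM : 0 < M) (hτ : 0 < τ) (hu : 0 < u)
    (hbound : ∀ s ≥ (0 : ℝ), |f s| ≤ M * Real.exp (s / τ))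
    {σ : ℝ} (hσ : σ ∈ Set.Ioo 0 t) :
    ‖(t - σ) ^ (α - 1) * f (u * σ)‖ ≤ (M * Real.exp (u * t / τ)) * (t - σ) ^ (α - 1) := by
  have hk : (0:ℝ) ≤ (t - σ) ^ (α - 1) := Real.rpow_nonneg (by linarith [hσ.2]) _
  have hfb : |f (u * σ)| ≤ M * Real.exp (u * t / τ) := by
    refine (hbound (u * σ) (mul_nonneg hu.le hσ.1.le)).trans ?_
    have h1 : u * σ / τ ≤ u * t / τ := by gcongr; exact hσ.2.le
    exact mul_le_mul_of_nonneg_left (Real.exp_le_exp.2 h1) hM.le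
  calc ‖(t - σ) ^ (α - 1) * f (u * σ)‖ = (t - σ) ^ (α - 1) * |f (u * σ)| := by
        rw [norm_mul, Real.norm_eq_abs, Real.norm_eq_abs, abs_of_nonneg hk]
    _ ≤ (t - σ) ^ (α - 1) * (M * Real.exp (u * t / τ)) :=
        mul_le_mul_of_nonneg_left hfb hk
    _ = (M * Real.exp (u * t / τ)) * (t - σ) ^ (α - 1) := by ring

lemma aux_g_int (α u τ M t : ℝ) (f : ℝ → ℝ)
    (hα : 0 < α) (hf : Measurable f) (hM : 0 < M) (hτ : 0 < τ) (hu : 0 < u)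
    (hbound : ∀ s ≥ (0 : ℝ), |f s| ≤ M * Real.exp (s / τ)) :
    IntegrableOn (fun σ => (t - σ) ^ (α - 1) * f (u * σ)) (Set.Ioo 0 t) := by
  refine Integrable.mono' ((aux_ker_int α t hα).const_mul (M * Real.exp (u * t / τ)))
    ?_ ?_
  · exact (((measurable_const.sub measurable_id).pow measurable_const).mul
      (hf.comp (measurable_id.const_mul u))).aestronglyMeasurable
  · refine (ae_restrict_iff' measurableSet_Ioo).2 (Filter.Eventually.of_forall ?_)
    intro σ hσ
    exact aux_ptbound α u τ M t f hM hτ hu hbound hσ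

lemma aux_norm_int (α u τ M t : ℝ) (f : ℝ → ℝ)
    (hα : 0 < α) (hf : Measurable f) (hM : 0 < M) (hτ : 0 < τ) (hu : 0 < u)
    (hbound : ∀ s ≥ (0 : ℝ), |f s| ≤ M * Real.exp (s / τ)) (ht : 0 ≤ t) :
    ∫ σ in Set.Ioo 0 t, ‖(t - σ) ^ (α - 1) * f (u * σ)‖ ≤
      (M * Real.exp (u * t / τ)) * (t ^ α / α) := by
  have h1 : ∫ σ in Set.Ioo 0 t, ‖(t - σ) ^ (α - 1) * f (u * σ)‖ ≤
      ∫ σ in Set.Ioo 0 t, (M * Real.exp (u * t / τ)) * (t - σ) ^ (α - 1) := by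
    refine setIntegral_mono_on ((aux_g_int α u τ M t f hα hf hM hτ hu hbound).norm)
      ((aux_ker_int α t hα).const_mul _) measurableSet_Ioo ?_
    intro σ hσ
    exact aux_ptbound α u τ M t f hM hτ hu hbound hσ
  calc ∫ σ in Set.Ioo 0 t, ‖(t - σ) ^ (α - 1) * f (u * σ)‖ ≤
      ∫ σ in Set.Ioo 0 t, (M * Real.exp (u * t / τ)) * (t - σ) ^ (α - 1) := h1
    _ = (M * Real.exp (u * t / τ)) * ∫ σ in Set.Ioo 0 t, (t - σ) ^ (α - 1) :=
        integral_const_mul _ _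
    _ = (M * Real.exp (u * t / τ)) * (t ^ α / α) := by rw [aux_ker_val α t hα ht]

theorem sumudu_rlIntegral (α : ℝ) (f : ℝ → ℝ) (M τ u : ℝ)
    (hα : 0 < α) (hα1 : α ≤ 1)
    (hf : Measurable f) (hM : 0 < M) (hτ : 0 < τ)
    (hbound : ∀ t ≥ (0 : ℝ), |f t| ≤ M * Real.exp (t / τ))
    (hu : 0 < u) (huτ : u < τ) :
    sumudu (rlIntegral α f) u = u ^ α * sumudu f u := by
  have hΓ : 0 < Real.Gamma α := Real.Gamma_pos_of_pos hα
  have hu0 : u ≠ 0 := ne_of_gt hu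
  have hb : 0 < 1 - u / τ := by
    have h1 : u / τ < 1 := (div_lt_one hτ).2 huτ
    linarith
  set F : ℝ → ℝ → ℝ := fun t σ =>
    (Set.Ioo (0:ℝ) t).indicator (fun σ => (t - σ) ^ (α - 1) * f (u * σ)) σ * Real.exp (-t)
    with hFdef
  have hsub : ∀ t ∈ Set.Ioi (0:ℝ), rlIntegral α f (u * t) * Real.exp (-t)
      = (u ^ α / Real.Gamma α) *
        ((∫ x in (0:ℝ)..t, (t - x) ^ (α - 1) * f (u * x)) * Real.exp (-t)) := by
    intro t ht
    rw [Set.mem_Ioi] at ht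
    have hcomp := intervalIntegral.integral_comp_mul_left
      (a := (0:ℝ)) (b := t) (f := fun s => (u * t - s) ^ (α - 1) * f s) (c := u) hu0
    rw [mul_zero, smul_eq_mul] at hcomp
    -- hcomp : ∫ x in 0..t, (u*t - u*x)^(α-1) * f (u*x) = u⁻¹ * ∫ s in 0..u*t, (u*t-s)^(α-1) * f s
    have hcongr : ∫ x in (0:ℝ)..t, (u * t - u * x) ^ (α - 1) * f (u * x)
        = ∫ x in (0:ℝ)..t, u ^ (α - 1) * ((t - x) ^ (α - 1) * f (u * x)) := by
      refine intervalIntegral.integral_congr ?_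
      intro x hx
      rw [Set.uIcc_of_le ht.le] at hx
      have hx2 : 0 ≤ t - x := sub_nonneg.2 hx.2
      have : u * t - u * x = u * (t - x) := by ring
      simp only []
      rw [this, Real.mul_rpow hu.le hx2]
      ring
    have hpow : u * u ^ (α - 1) = u ^ α := by
      have h1 : u ^ α = u ^ ((1:ℝ) + (α - 1)) := by congr 1; ring
      rw [h1, Real.rpow_add hu, Real.rpow_one]
    have hval : ∫ s in (0:ℝ)..(u*t), (u * t - s) ^ (α - 1) * f s
        = u ^ α * ∫ x in (0:ℝ)..t, (t - x) ^ (α - 1) * f (u * x) := by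
      have h2 : ∫ x in (0:ℝ)..t, u ^ (α - 1) * ((t - x) ^ (α - 1) * f (u * x))
          = u ^ (α - 1) * ∫ x in (0:ℝ)..t, (t - x) ^ (α - 1) * f (u * x) :=
        intervalIntegral.integral_const_mul _ _
      have h3 := hcongr.symm.trans hcomp
      rw [h2] at h3
      field_simp at h3 ⊢
      rw [← h3, ← hpow]
      ring
    rw [rlIntegral, hval]
    ring
  have hF1 : ∀ t ∈ Set.Ioi (0:ℝ),
      (∫ x in (0:ℝ)..t, (t - x) ^ (α - 1) * f (u * x)) * Real.exp (-t)
        = ∫ σ in Set.Ioi (0:ℝ), F t σ := by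
    intro t ht
    rw [Set.mem_Ioi] at ht
    rw [hFdef]
    simp only []
    rw [integral_mul_const, setIntegral_indicator measurableSet_Ioo,
      Set.inter_eq_self_of_subset_right Set.Ioo_subset_Ioi_self,
      ← integral_Ioc_eq_integral_Ioo, ← intervalIntegral.integral_of_le ht.le]
  have hFmeas : AEStronglyMeasurable (Function.uncurry F)
      ((volume.restrict (Set.Ioi (0:ℝ))).prod (volume.restrict (Set.Ioi (0:ℝ)))) := by
    have heq : Function.uncurry F = fun p : ℝ × ℝ =>
        ({q : ℝ × ℝ | 0 < q.2 ∧ q.2 < q.1}.indicator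
          (fun q => (q.1 - q.2) ^ (α - 1) * f (u * q.2)) p) * Real.exp (-p.1) := by
      funext p
      rw [Function.uncurry, hFdef]
      simp only [Set.indicator_apply, Set.mem_Ioo, Set.mem_setOf_eq]
    rw [heq]
    have hS : MeasurableSet {q : ℝ × ℝ | 0 < q.2 ∧ q.2 < q.1} :=
      (measurableSet_lt measurable_const measurable_snd).inter
        (measurableSet_lt measurable_snd measurable_fst)
    exact ((((measurable_fst.sub measurable_snd).pow measurable_const).mul
        (hf.comp (measurable_snd.const_mul u))).indicator hS).mul
        (measurable_fst.neg.exp) |>.aestronglyMeasurable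
  have hFint : Integrable (Function.uncurry F)
      ((volume.restrict (Set.Ioi (0:ℝ))).prod (volume.restrict (Set.Ioi (0:ℝ)))) := by
    rw [integrable_prod_iff hFmeas]
    constructor
    · filter_upwards [ae_restrict_mem measurableSet_Ioi] with t ht
      have h1 : IntegrableOn (fun σ => (t - σ) ^ (α - 1) * f (u * σ)) (Set.Ioo 0 t)
          (volume.restrict (Set.Ioi (0:ℝ))) := by
        rw [IntegrableOn, Measure.restrict_restrict measurableSet_Ioo,
          Set.inter_eq_self_of_subset_left Set.Ioo_subset_Ioi_self]
        exact aux_g_int α u τ M t f hα hf hM hτ hu hbound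
      have h2 := (h1.integrable_indicator measurableSet_Ioo).mul_const (Real.exp (-t))
      simpa [hFdef] using h2
    · refine Integrable.mono'
        (((exp_neg_integrableOn_Ioi 0 (b := (1 - u / τ) / 2) (by positivity)).const_mul
          ((M / α) * (1 + 2 / (1 - u / τ))))) (hFmeas.norm.integral_prod_right') ?_
      filter_upwards [ae_restrict_mem measurableSet_Ioi] with t ht
      rw [Set.mem_Ioi] at ht
      have hnn : 0 ≤ ∫ σ in Set.Ioi (0:ℝ), ‖Function.uncurry F (t, σ)‖ :=
        integral_nonneg fun σ => norm_nonneg _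
      rw [Real.norm_eq_abs, abs_of_nonneg hnn]
      have hval : ∫ σ in Set.Ioi (0:ℝ), ‖Function.uncurry F (t, σ)‖
          = (∫ σ in Set.Ioo (0:ℝ) t, ‖(t - σ) ^ (α - 1) * f (u * σ)‖) * Real.exp (-t) := by
        have : ∀ σ, ‖Function.uncurry F (t, σ)‖
            = (Set.Ioo (0:ℝ) t).indicator (fun σ => ‖(t - σ) ^ (α - 1) * f (u * σ)‖) σ
              * Real.exp (-t) := by
          intro σ
          rw [Function.uncurry, hFdef]
          simp only [norm_mul, Real.norm_eq_abs (Real.exp (-t)), abs_of_pos (Real.exp_pos (-t)),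
            norm_indicator_eq_indicator_norm]
        simp_rw [this]
        rw [integral_mul_const, setIntegral_indicator measurableSet_Ioo,
          Set.inter_eq_self_of_subset_right Set.Ioo_subset_Ioi_self]
      rw [hval]
      have hstep : (∫ σ in Set.Ioo (0:ℝ) t, ‖(t - σ) ^ (α - 1) * f (u * σ)‖) * Real.exp (-t)
          ≤ ((M * Real.exp (u * t / τ)) * (t ^ α / α)) * Real.exp (-t) :=
        mul_le_mul_of_nonneg_right
          (aux_norm_int α u τ M t f hα hf hM hτ hu hbound ht.le) (Real.exp_pos _).le
      refine hstep.trans ?_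
      have hexp : Real.exp (u * t / τ) * Real.exp (-t) = Real.exp (-((1 - u / τ) * t)) := by
        rw [← Real.exp_add]; congr 1; field_simp; ring
      have hkey := aux_texp α (1 - u / τ) t hα hα1 hb ht.le
      calc (M * Real.exp (u * t / τ)) * (t ^ α / α) * Real.exp (-t)
          = (M / α) * (t ^ α * Real.exp (-((1 - u / τ) * t))) := by
            rw [← hexp]; ring
        _ ≤ (M / α) * ((1 + 2 / (1 - u / τ)) * Real.exp (-((1 - u / τ) / 2) * t)) := by
            have hMα : 0 ≤ M / α := by positivity
            exact mul_le_mul_of_nonneg_left hkey hMα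
        _ = (M / α) * (1 + 2 / (1 - u / τ)) * Real.exp (-((1 - u / τ) / 2) * t) := by ring
  have hF2 : ∀ σ ∈ Set.Ioi (0:ℝ),
      (∫ t in Set.Ioi (0:ℝ), F t σ) = Real.Gamma α * (f (u * σ) * Real.exp (-σ)) := by
    intro σ hσ
    rw [Set.mem_Ioi] at hσ
    have hFσ : ∀ t, F t σ =
        (Set.Ioi σ).indicator (fun t => (t - σ) ^ (α - 1) * Real.exp (-t)) t * f (u * σ) := by
      intro t
      rw [hFdef]
      simp only [Set.indicator_apply, Set.mem_Ioo, Set.mem_Ioi]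
      by_cases h : σ < t
      · rw [if_pos ⟨hσ, h⟩, if_pos h]; ring
      · rw [if_neg (fun hc => h hc.2), if_neg h, zero_mul, zero_mul]
    simp_rw [hFσ]
    rw [integral_mul_const, setIntegral_indicator measurableSet_Ioi,
      Set.inter_eq_self_of_subset_right (Set.Ioi_subset_Ioi hσ.le)]
    have htrans : ∫ t in Set.Ioi σ, (t - σ) ^ (α - 1) * Real.exp (-t)
        = ∫ x in Set.Ioi (0:ℝ), x ^ (α - 1) * Real.exp (-(x + σ)) := by
      rw [← integral_indicator measurableSet_Ioi, ← integral_indicator measurableSet_Ioi]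
      rw [← integral_add_right_eq_self
        (fun x => (Set.Ioi σ).indicator (fun t => (t - σ) ^ (α - 1) * Real.exp (-t)) x) σ]
      congr 1
      funext x
      simp only [Set.indicator_apply, Set.mem_Ioi]
      by_cases hx : 0 < x
      · rw [if_pos (by linarith), if_pos hx, add_sub_cancel_right]
      · rw [if_neg (fun hc => hx (by linarith)), if_neg hx]
    rw [htrans]
    have hcongr : ∫ x in Set.Ioi (0:ℝ), x ^ (α - 1) * Real.exp (-(x + σ))
        = (∫ x in Set.Ioi (0:ℝ), Real.exp (-x) * x ^ (α - 1)) * Real.exp (-σ) := by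
      rw [← integral_mul_const]
      congr 1
      funext x
      rw [mul_assoc, mul_comm (Real.exp (-x)), mul_assoc, ← Real.exp_add]
      congr 2
      ring
    rw [hcongr, ← Real.Gamma_eq_integral hα]
    ring
  unfold sumudu
  calc ∫ t in Set.Ioi (0:ℝ), rlIntegral α f (u * t) * Real.exp (-t)
      = ∫ t in Set.Ioi (0:ℝ), (u ^ α / Real.Gamma α) *
          ((∫ x in (0:ℝ)..t, (t - x) ^ (α - 1) * f (u * x)) * Real.exp (-t)) :=
        setIntegral_congr_fun measurableSet_Ioi hsub
    _ = (u ^ α / Real.Gamma α) * ∫ t in Set.Ioi (0:ℝ),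
          ((∫ x in (0:ℝ)..t, (t - x) ^ (α - 1) * f (u * x)) * Real.exp (-t)) :=
        integral_const_mul _ _
    _ = (u ^ α / Real.Gamma α) * ∫ t in Set.Ioi (0:ℝ), ∫ σ in Set.Ioi (0:ℝ), F t σ := by
        rw [setIntegral_congr_fun measurableSet_Ioi hF1]
    _ = (u ^ α / Real.Gamma α) * ∫ σ in Set.Ioi (0:ℝ), ∫ t in Set.Ioi (0:ℝ), F t σ := by
        rw [integral_integral_swap hFint]
    _ = (u ^ α / Real.Gamma α) * ∫ σ in Set.Ioi (0:ℝ),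
          Real.Gamma α * (f (u * σ) * Real.exp (-σ)) := by
        rw [setIntegral_congr_fun measurableSet_Ioi hF2]
    _ = (u ^ α / Real.Gamma α) *
          (Real.Gamma α * ∫ σ in Set.Ioi (0:ℝ), f (u * σ) * Real.exp (-σ)) := by
        rw [integral_const_mul]
    _ = u ^ α * ∫ t in Set.Ioi (0:ℝ), f (u * t) * Real.exp (-t) := by
        field_simp
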